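/- For every a ∈ Θ̄ and every b ∈ M \ Θ̄, both ab ∈ M \ Θ̄ and ba ∈ M \ Θ̄. -/

import Mathlib

namespace GarsideOrder

variable {G : Type*} [Group G]

/-- `a ≤_R b` iff `b * a⁻¹ ∈ M`. -/
def leR (M : Submonoid G) (a b : G) : Prop := b * a⁻¹ ∈ M

/-- `a ≤_L b` iff `a⁻¹ * b ∈ M`. -/
def leL (M : Submonoid G) (a b : G) : Prop := a⁻¹ * b ∈ M

/-- Right divisors (in `M`) of `a`. -/
def DivR (M : Submonoid G) (a : G) : Set G := {b : G | b ∈ M ∧ leR M b a}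

/-- Left divisors (in `M`) of `a`. -/
def DivL (M : Submonoid G) (a : G) : Set G := {b : G | b ∈ M ∧ leL M b a}

/-- `a` is balanced if its sets of right and left divisors coincide. -/
def Balanced (M : Submonoid G) (a : G) : Prop := DivR M a = DivL M a

open Classical in
/-- The `N`-tail of `a`: the unique `b ∈ N` having the same right divisors lying in `N`
as `a` (w.r.t. the divisibility of the ambient monoid `M`). -/
noncomputable def tail (M N : Submonoid G) (a : G) : G :=
  if h : ∃ b : G, b ∈ N ∧
      {c : G | c ∈ N ∧ leR M c a} = {c : G | c ∈ N ∧ leR M c b} then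
    h.choose
  else 1

/-- Iterated stripping of alternating tails: first the `M₁`-tail, then the `N`-tail, etc. -/
noncomputable def strip (M M₁ N : Submonoid G) : ℕ → G → G
  | 0, a => a
  | i + 1, a =>
      strip M M₁ N i a *
        (tail M (if i % 2 = 0 then M₁ else N) (strip M M₁ N i a))⁻¹

/-- The breadth of `a`: the length of the alternating form of `a`, i.e. the least `p ≥ 1`
such that stripping alternating tails `p` times reaches `1`. -/
noncomputable def bh (M M₁ N : Submonoid G) (a : G) : ℕ :=
  sInf {p : ℕ | 1 ≤ p ∧ strip M M₁ N p a = 1}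

/-- The depth of `a`: `(bh a - 1)/2` if `bh a` is odd, `bh a / 2` if `bh a` is even;
in both cases this is `bh a / 2` with natural division. -/
noncomputable def dpt (M M₁ N : Submonoid G) (a : G) : ℕ := bh M M₁ N a / 2

/-- `a ∈ M` is unmovable if `Δ` does not right-divide it. -/
def Unmovable (M : Submonoid G) (Δ a : G) : Prop := a ∈ M ∧ ¬ leR M Δ a

/-- `α` is `(H, G₁)`-negative: its `Δ`-form is `a Δ^{-k}` with `k ≥ 1` and
`dpt a < dpt (Δ^k)`. -/
def Negative (M M₁ N : Submonoid G) (Δ : G) (α : G) : Prop :=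
  ∃ a : G, ∃ k : ℕ, Unmovable M Δ a ∧ 1 ≤ k ∧ α = a * (Δ ^ k)⁻¹ ∧
    dpt M M₁ N a < dpt M M₁ N (Δ ^ k)

/-- `α` is `(H, G₁)`-positive if `α⁻¹` is `(H, G₁)`-negative. -/
def Positive (M M₁ N : Submonoid G) (Δ : G) (α : G) : Prop :=
  Negative M M₁ N Δ α⁻¹

/-- The set `Θ` of theta elements `θ^k a₀`, `k ≥ 1`, `a₀ ∈ M₁`. -/
def thetaSet (M₁ : Submonoid G) (θ : G) : Set G :=
  {x : G | ∃ k : ℕ, 1 ≤ k ∧ ∃ a₀ ∈ M₁, x = θ ^ k * a₀}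

/-- `Θ̄ = Θ ∪ M₁`. -/
def thetaBar (M₁ : Submonoid G) (θ : G) : Set G := thetaSet M₁ θ ∪ (M₁ : Set G)

/-- Condition A with constant `ζ`: `dpt (Δ^k) = ζ k + 1` for all `k ≥ 1`. -/
def CondA (M M₁ N : Submonoid G) (Δ : G) (ζ : ℕ) : Prop :=
  ∀ k : ℕ, 1 ≤ k → dpt M M₁ N (Δ ^ k) = ζ * k + 1

/-- Condition B with constant `ζ`. -/
def CondB (M M₁ N : Submonoid G) (Δ θ : G) (ζ : ℕ) : Prop :=
  ∀ a b c : G, ∀ t : ℤ,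
    Unmovable M Δ a → Unmovable M Δ b →
    ¬(a ∈ thetaBar M₁ θ ∧ b ∈ thetaBar M₁ θ) →
    Unmovable M Δ c → a * b = c * Δ ^ t →
    ∃ ε : ℕ, ε ≤ 1 ∧
      (dpt M M₁ N c : ℤ) =
        (dpt M M₁ N a : ℤ) + (dpt M M₁ N b : ℤ) - (ζ : ℤ) * t - (ε : ℤ) ∧
      ((a ∈ thetaSet M₁ θ ∨ b ∈ thetaSet M₁ θ ∨ c ∈ M₁) → ε = 1)

/-- A Garside structure with group of fractions the subgroup `car`. -/
structure IsGarsideOn (car : Subgroup G) (M : Submonoid G) (Δ : G) : Prop where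
  M_sub : (M : Set G) ⊆ (car : Set G)
  delta_mem : Δ ∈ M
  units_trivial : ∀ x : G, x ∈ M → x⁻¹ ∈ M → x = 1
  noetherian : ∀ a ∈ M, ∃ n : ℕ, 1 ≤ n ∧ ∀ l : List G,
      (∀ x ∈ l, x ∈ M ∧ x ≠ 1) → l.prod = a → l.length ≤ n
  balanced : Balanced M Δ
  div_finite : (DivR M Δ).Finite
  div_gen_monoid : Submonoid.closure (DivR M Δ) = M
  div_gen_group : Subgroup.closure (DivR M Δ) = car
  meet : ∀ a ∈ car, ∀ b ∈ car, ∃ c ∈ car, leR M c a ∧ leR M c b ∧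
      ∀ d ∈ car, leR M d a → leR M d b → leR M d c
  join : ∀ a ∈ car, ∀ b ∈ car, ∃ c ∈ car, leR M a c ∧ leR M b c ∧
      ∀ d ∈ car, leR M a d → leR M b d → leR M c d

/-- The parabolic submonoid determined by `δ`: the submonoid generated by `Div(δ)`. -/
def parM (M : Submonoid G) (δ : G) : Submonoid G := Submonoid.closure (DivR M δ)

/-- The parabolic subgroup determined by `δ`: the subgroup generated by `Div(δ)`. -/
def parG (M : Submonoid G) (δ : G) : Subgroup G := Subgroup.closure (DivR M δ)

/-- `δ` determines a parabolic substructure of `(G, M, Δ)`. -/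
structure IsParabolic (M : Submonoid G) (Δ δ : G) : Prop where
  mem : δ ∈ M
  balanced : Balanced M δ
  div_eq : DivR M δ = DivR M Δ ∩ (parM M δ : Set G)

/-- The setting of Section 3: a Garside structure `(car, M, Δ)` together with two
parabolic substructures `(H, N, Λ)` (given by `lam`) and `(G₁, M₁, Δ₁)` (given by `δ1`),
with `N ≠ M`, `M₁ ≠ M`, `N ∪ M₁` generating `M`, `Δ` central, `Δ₁` central in `G₁`. -/
structure Setting (G : Type*) [Group G] where
  car : Subgroup G
  M : Submonoid G
  Δ : G
  δ1 : G
  lam : G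
  garside : IsGarsideOn car M Δ
  par1 : IsParabolic M Δ δ1
  parH : IsParabolic M Δ lam
  N_ne : parM M lam ≠ M
  M1_ne : parM M δ1 ≠ M
  unionGen : Submonoid.closure ((parM M lam : Set G) ∪ (parM M δ1 : Set G)) = M
  delta_central : ∀ g ∈ car, Δ * g = g * Δ
  delta1_central : ∀ g ∈ parG M δ1, δ1 * g = g * δ1

namespace Setting

variable (S : Setting G)

/-- The parabolic submonoid `M₁`. -/
def M₁ : Submonoid G := parM S.M S.δ1

/-- The parabolic submonoid `N`. -/
def Nsub : Submonoid G := parM S.M S.lam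

/-- The parabolic subgroup `G₁`. -/
def G₁ : Subgroup G := parG S.M S.δ1

/-- `θ = Δ Δ₁⁻¹`. -/
def theta : G := S.Δ * S.δ1⁻¹

/-- The set of `(H, G₁)`-negative elements. -/
def Neg : Set G := {α : G | Negative S.M S.M₁ S.Nsub S.Δ α}

/-- The set of `(H, G₁)`-positive elements. -/
def Pos : Set G := {α : G | α⁻¹ ∈ S.Neg}

/-- Condition A. -/
def condA (ζ : ℕ) : Prop := CondA S.M S.M₁ S.Nsub S.Δ ζ

/-- Condition B. -/
def condB (ζ : ℕ) : Prop := CondB S.M S.M₁ S.Nsub S.Δ S.theta ζ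

/-- `(H, G₁)` is a Dehornoy structure: `PP ⊆ P`, `G₁ P G₁ ⊆ P`, and the group is the
disjoint union of `P`, `P⁻¹` and `G₁`. -/
def IsDehornoy : Prop :=
  (∀ α ∈ S.Pos, ∀ β ∈ S.Pos, α * β ∈ S.Pos) ∧
  (∀ g₁ ∈ S.G₁, ∀ α ∈ S.Pos, ∀ g₂ ∈ S.G₁, g₁ * α * g₂ ∈ S.Pos) ∧
  (∀ α ∈ S.car, α ∈ S.Pos ∨ α ∈ S.Neg ∨ α ∈ S.G₁) ∧
  (∀ α : G, ¬(α ∈ S.Pos ∧ α ∈ S.Neg)) ∧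
  (∀ α : G, ¬(α ∈ S.Pos ∧ α ∈ S.G₁)) ∧
  (∀ α : G, ¬(α ∈ S.Neg ∧ α ∈ S.G₁))

end Setting

end GarsideOrder


namespace GarsideOrder
namespace Stmt4Aux

variable {G : Type*} [Group G] (S : Setting G)

lemma mem_car (hc : S.car = ⊤) (g : G) : g ∈ S.car := by rw [hc]; trivial

lemma delta_comm (hc : S.car = ⊤) (g : G) : S.Δ * g = g * S.Δ :=
  S.delta_central g (mem_car S hc g)

lemma M1_le_M : S.M₁ ≤ S.M :=
  Submonoid.closure_le.mpr fun _ hx => hx.1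

lemma M1_le_G1 : ∀ x ∈ S.M₁, x ∈ S.G₁ := by
  intro x hx
  have h : S.M₁ ≤ S.G₁.toSubmonoid :=
    Submonoid.closure_le.mpr fun _ hy => Subgroup.subset_closure hy
  exact h hx

lemma d1_divR : S.δ1 ∈ DivR S.M S.δ1 :=
  ⟨S.par1.mem, by simpa [leR] using one_mem S.M⟩

lemma d1_M1 : S.δ1 ∈ S.M₁ := Submonoid.subset_closure (d1_divR S)

lemma d1_G1 : S.δ1 ∈ S.G₁ := M1_le_G1 S _ (d1_M1 S)

lemma d1_M : S.δ1 ∈ S.M := S.par1.mem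

lemma d1_comm_M1 {x : G} (hx : x ∈ S.M₁) : Commute S.δ1 x :=
  S.delta1_central x (M1_le_G1 S x hx)

lemma theta_M : S.theta ∈ S.M := by
  have h2 := d1_divR S
  rw [S.par1.div_eq] at h2
  exact h2.1.2

lemma eq_one_of {x : G} (h1 : x ∈ S.M) (h2 : x⁻¹ ∈ S.M) : x = 1 :=
  S.garside.units_trivial x h1 h2

lemma theta_mul_d1 : S.theta * S.δ1 = S.Δ := by
  show S.Δ * S.δ1⁻¹ * S.δ1 = S.Δ
  simp

lemma d1_mul_theta (hc : S.car = ⊤) : S.δ1 * S.theta = S.Δ := by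
  show S.δ1 * (S.Δ * S.δ1⁻¹) = S.Δ
  rw [← mul_assoc, ← delta_comm S hc S.δ1]
  simp

lemma theta_comm_d1 (hc : S.car = ⊤) : Commute S.δ1 S.theta := by
  show S.δ1 * S.theta = S.theta * S.δ1
  rw [d1_mul_theta S hc, theta_mul_d1 S]

lemma theta_comm_G1 (hc : S.car = ⊤) {y : G} (hy : y ∈ S.G₁) :
    Commute S.theta y := by
  show S.theta * y = y * S.theta
  show S.Δ * S.δ1⁻¹ * y = y * (S.Δ * S.δ1⁻¹)
  have hcm : Commute S.δ1 y := S.delta1_central y hy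
  have h1 : S.δ1⁻¹ * y = y * S.δ1⁻¹ := hcm.inv_left.eq
  rw [mul_assoc, h1, ← mul_assoc, delta_comm S hc y, mul_assoc]

lemma leL_trans {a b c : G} (h1 : leL S.M a b) (h2 : leL S.M b c) : leL S.M a c := by
  have : a⁻¹ * c = (a⁻¹ * b) * (b⁻¹ * c) := by group
  rw [leL, this]; exact mul_mem h1 h2

lemma joinL (hc : S.car = ⊤) (a b : G) :
    ∃ w : G, leL S.M a w ∧ leL S.M b w ∧
      ∀ d, leL S.M a d → leL S.M b d → leL S.M w d := by
  obtain ⟨c, -, h1, h2, h3⟩ := S.garside.meet a⁻¹ (mem_car S hc _) b⁻¹ (mem_car S hc _)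
  refine ⟨c⁻¹, h1, h2, ?_⟩
  intro d hda hdb
  have := h3 d⁻¹ (mem_car S hc _) (by simpa [leR, leL] using hda)
    (by simpa [leR, leL] using hdb)
  simpa [leL, leR] using this

lemma headF (hc : S.car = ⊤) (u v : G) (hu : u ∈ S.M) (hv : v ∈ S.M)
    (h : leL S.M S.Δ (u * v)) :
    ∃ c ∈ S.M, leL S.M c v ∧ leL S.M c S.Δ ∧ leL S.M S.Δ (u * c) := by
  obtain ⟨w, hΔw, huw, hleast⟩ := joinL S hc S.Δ u
  have hub1 : leL S.M w (u * v) := hleast _ h (by simpa [leL] using hv)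
  have hub2 : leL S.M w (u * S.Δ) := by
    refine hleast _ ?_ (by simpa [leL] using S.garside.delta_mem)
    show S.Δ⁻¹ * (u * S.Δ) ∈ S.M
    rw [← delta_comm S hc u]
    simpa using hu
  refine ⟨u⁻¹ * w, huw, ?_, ?_, ?_⟩
  · show (u⁻¹ * w)⁻¹ * v ∈ S.M
    have : (u⁻¹ * w)⁻¹ * v = w⁻¹ * (u * v) := by group
    rw [this]; exact hub1
  · show (u⁻¹ * w)⁻¹ * S.Δ ∈ S.M
    have : (u⁻¹ * w)⁻¹ * S.Δ = w⁻¹ * (u * S.Δ) := by group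
    rw [this]; exact hub2
  · show S.Δ⁻¹ * (u * (u⁻¹ * w)) ∈ S.M
    have : S.Δ⁻¹ * (u * (u⁻¹ * w)) = S.Δ⁻¹ * w := by group
    rw [this]; exact hΔw

lemma LstarGen (hc : S.car = ⊤) (k : ℕ)
    (IH : ∀ c ∈ S.M, leL S.M c S.theta → leL S.M c (S.δ1 ^ k) → c = 1) :
    ∀ c ∈ S.M, leL S.M c (S.δ1 ^ (k + 1)) → leL S.M c S.Δ → leL S.M c S.δ1 := by
  intro c hcM h1 h2
  obtain ⟨w, hcw, hdw, hleast⟩ := joinL S hc c S.δ1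
  have hwn : leL S.M w (S.δ1 ^ (k + 1)) := by
    refine hleast _ h1 ?_
    show S.δ1⁻¹ * S.δ1 ^ (k + 1) ∈ S.M
    rw [pow_succ']
    simpa using pow_mem (d1_M S) k
  have hwΔ : leL S.M w S.Δ := by
    refine hleast _ h2 ?_
    show S.δ1⁻¹ * S.Δ ∈ S.M
    rw [← delta_comm S hc S.δ1⁻¹]
    have : S.Δ * S.δ1⁻¹ ∈ S.M := theta_M S
    simpa using this
  have hw'M : S.δ1⁻¹ * w ∈ S.M := hdw
  have h3 : leL S.M (S.δ1⁻¹ * w) (S.δ1 ^ k) := by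
    show (S.δ1⁻¹ * w)⁻¹ * S.δ1 ^ k ∈ S.M
    have : (S.δ1⁻¹ * w)⁻¹ * S.δ1 ^ k = w⁻¹ * S.δ1 ^ (k + 1) := by
      rw [pow_succ']; group
    rw [this]; exact hwn
  have h4 : leL S.M (S.δ1⁻¹ * w) S.theta := by
    show (S.δ1⁻¹ * w)⁻¹ * S.theta ∈ S.M
    have : (S.δ1⁻¹ * w)⁻¹ * S.theta = w⁻¹ * (S.δ1 * S.theta) := by group
    rw [this, d1_mul_theta S hc]; exact hwΔ
  have hone : S.δ1⁻¹ * w = 1 := IH _ hw'M h4 h3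
  have hwd : w = S.δ1 := by
    have := congrArg (fun z => S.δ1 * z) hone
    simpa using this
  rw [hwd] at hcw; exact hcw

lemma P2main (hc : S.car = ⊤) :
    ∀ k : ℕ, ∀ c ∈ S.M, leL S.M c S.theta → leL S.M c (S.δ1 ^ k) → c = 1 := by
  intro k
  induction k with
  | zero =>
    intro c hcM _ h0
    refine eq_one_of S hcM ?_
    simpa [leL] using h0
  | succ k IHk =>
    intro c hcM hθ h1
    have hcΔ : leL S.M c S.Δ := by
      show c⁻¹ * S.Δ ∈ S.M
      rw [← theta_mul_d1 S, ← mul_assoc]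
      exact mul_mem hθ (d1_M S)
    have hcδ : leL S.M c S.δ1 := LstarGen S hc k IHk c hcM h1 hcΔ
    have hcDivL : c ∈ DivL S.M S.δ1 := ⟨hcM, hcδ⟩
    have hcDiv : c ∈ DivR S.M S.δ1 := by rw [S.par1.balanced]; exact hcDivL
    have hcM1 : c ∈ S.M₁ := Submonoid.subset_closure hcDiv
    have hδc : S.δ1 * c ∈ DivR S.M S.Δ := by
      refine ⟨mul_mem (d1_M S) hcM, ?_⟩
      show S.Δ * (S.δ1 * c)⁻¹ ∈ S.M
      have : S.Δ * (S.δ1 * c)⁻¹ = c⁻¹ * S.theta := by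
        show S.Δ * (S.δ1 * c)⁻¹ = c⁻¹ * (S.Δ * S.δ1⁻¹)
        rw [mul_inv_rev, ← mul_assoc, delta_comm S hc c⁻¹, mul_assoc]
      rw [this]; exact hθ
    have hδcR : S.δ1 * c ∈ DivR S.M S.δ1 := by
      rw [S.par1.div_eq]
      exact ⟨hδc, mul_mem (d1_M1 S) hcM1⟩
    have hinv : c⁻¹ ∈ S.M := by
      have h5 := hδcR.2
      have : S.δ1 * (S.δ1 * c)⁻¹ = c⁻¹ := by
        have hcm := (d1_comm_M1 S hcM1).eq
        rw [mul_inv_rev, ← mul_assoc]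
        rw [show S.δ1 * c⁻¹ = c⁻¹ * S.δ1 from ((d1_comm_M1 S hcM1).inv_right.eq)]
        group
      rwa [leR, this] at h5
    exact eq_one_of S hcM hinv

lemma Lstar (hc : S.car = ⊤) (n : ℕ) :
    ∀ c ∈ S.M, leL S.M c (S.δ1 ^ n) → leL S.M c S.Δ → leL S.M c S.δ1 := by
  cases n with
  | zero =>
    intro c hcM h1 _
    have hc1 : c = 1 := eq_one_of S hcM (by simpa [leL] using h1)
    subst hc1
    simpa [leL] using d1_M S
  | succ n => exact LstarGen S hc n (P2main S hc n)

lemma head_exists : ∀ a ∈ S.M,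
    a = 1 ∨ ∃ e r : G, e ∈ DivR S.M S.Δ ∧ e ≠ 1 ∧ r ∈ S.M ∧ a = e * r := by
  intro a ha
  have ha' : a ∈ Submonoid.closure (DivR S.M S.Δ) := by
    rw [S.garside.div_gen_monoid]; exact ha
  induction ha' using Submonoid.closure_induction with
  | mem x hx =>
    by_cases hx1 : x = 1
    · exact Or.inl hx1
    · exact Or.inr ⟨x, 1, hx, hx1, one_mem _, (mul_one x).symm⟩
  | one => exact Or.inl rfl
  | mul x y hx hy ihx ihy =>
    have hxM : x ∈ S.M := by rw [← S.garside.div_gen_monoid]; exact hx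
    have hyM : y ∈ S.M := by rw [← S.garside.div_gen_monoid]; exact hy
    rcases ihx hxM with h1 | ⟨e, r, he, hne, hrM, hxe⟩
    · rcases ihy hyM with h2 | ⟨e, r, he, hne, hrM, hye⟩
      · exact Or.inl (by rw [h1, h2, one_mul])
      · exact Or.inr ⟨e, r, he, hne, hrM, by rw [h1, one_mul, hye]⟩
    · exact Or.inr ⟨e, r * y, he, hne, mul_mem hrM hyM, by rw [hxe, mul_assoc]⟩

lemma DL (hc : S.car = ⊤) : ∀ B : ℕ, ∀ a ∈ S.M,
    (∀ l : List G, (∀ x ∈ l, x ∈ S.M ∧ x ≠ 1) → l.prod = a → l.length ≤ B) →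
    ∀ n : ℕ, leL S.M a (S.δ1 ^ n) → a ∈ S.M₁ := by
  intro B
  induction B with
  | zero =>
    intro a haM hbound n _
    by_cases h1 : a = 1
    · rw [h1]; exact one_mem _
    · exfalso
      have := hbound [a] (by simp [haM, h1]) (by simp)
      simp at this
  | succ B IH =>
    intro a haM hbound n hle
    rcases head_exists S a haM with h1 | ⟨e, r, he, hne, hrM, hae⟩
    · rw [h1]; exact one_mem _
    · have heM : e ∈ S.M := he.1
      have heLa : leL S.M e a := by
        show e⁻¹ * a ∈ S.M
        rw [hae]; simpa using hrM
      have heLd : leL S.M e (S.δ1 ^ n) := leL_trans S heLa hle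
      have heLΔ : leL S.M e S.Δ := by
        have : e ∈ DivL S.M S.Δ := by rw [← S.garside.balanced]; exact he
        exact this.2
      have heδ : leL S.M e S.δ1 := Lstar S hc n e heM heLd heLΔ
      have heM1 : e ∈ S.M₁ := by
        refine Submonoid.subset_closure ?_
        rw [S.par1.balanced]; exact ⟨heM, heδ⟩
      have hre : r = e⁻¹ * a := by rw [hae]; group
      have hrLd : leL S.M r (S.δ1 ^ n) := by
        show r⁻¹ * S.δ1 ^ n ∈ S.M
        have hcm : e * S.δ1 ^ n = S.δ1 ^ n * e := ((d1_comm_M1 S heM1).symm.pow_right n).eq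
        have : r⁻¹ * S.δ1 ^ n = (a⁻¹ * S.δ1 ^ n) * e := by
          rw [hre, mul_inv_rev, inv_inv, mul_assoc, hcm]; group
        rw [this]; exact mul_mem hle heM
      have hbound' : ∀ l : List G, (∀ x ∈ l, x ∈ S.M ∧ x ≠ 1) → l.prod = r →
          l.length ≤ B := by
        intro l hl hp
        have := hbound (e :: l) ?_ (by simp [hp, hae])
        · simpa using this
        · intro x hx
          rcases List.mem_cons.mp hx with h | h
          · rw [h]; exact ⟨heM, hne⟩
          · exact hl x h
      have hrM1 : r ∈ S.M₁ := IH r hrM hbound' n hrLd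
      rw [hae]; exact mul_mem heM1 hrM1

lemma mem_M1_of_leL (hc : S.car = ⊤) {x : G} (hx : x ∈ S.M) {n : ℕ}
    (h : leL S.M x (S.δ1 ^ n)) : x ∈ S.M₁ := by
  obtain ⟨B, -, hB⟩ := S.garside.noetherian x hx
  exact DL S hc B x hx hB n h

lemma compl_divR {d : G} (hd : d ∈ DivR S.M S.δ1) : d⁻¹ * S.δ1 ∈ DivR S.M S.δ1 := by
  have hdL : d ∈ DivL S.M S.δ1 := by rw [← S.par1.balanced]; exact hd
  refine ⟨hdL.2, ?_⟩
  show S.δ1 * (d⁻¹ * S.δ1)⁻¹ ∈ S.M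
  have : S.δ1 * (d⁻¹ * S.δ1)⁻¹ = d := by group
  rw [this]; exact hd.1

lemma Aprime : ∀ P ∈ S.M₁, ∃ Q ∈ S.M₁, ∃ m : ℕ, P * Q = S.δ1 ^ m := by
  intro P hP
  induction hP using Submonoid.closure_induction with
  | mem d hd =>
    refine ⟨d⁻¹ * S.δ1, Submonoid.subset_closure (compl_divR S hd), 1, ?_⟩
    rw [pow_one]; group
  | one => exact ⟨1, one_mem _, 0, by simp⟩
  | mul x y hx hy ihx ihy =>
    obtain ⟨Qx, hQx, mx, ex⟩ := ihx
    obtain ⟨Qy, hQy, my, ey⟩ := ihy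
    refine ⟨Qy * Qx, mul_mem hQy hQx, my + mx, ?_⟩
    have hcm : Qx * S.δ1 ^ my = S.δ1 ^ my * Qx := ((d1_comm_M1 S hQx).symm.pow_right my).eq
    calc x * y * (Qy * Qx) = x * (y * Qy) * Qx := by group
      _ = x * S.δ1 ^ my * Qx := by rw [ey]
      _ = x * (Qx * S.δ1 ^ my) := by rw [hcm]; group
      _ = (x * Qx) * S.δ1 ^ my := by group
      _ = S.δ1 ^ mx * S.δ1 ^ my := by rw [ex]
      _ = S.δ1 ^ (my + mx) := by rw [← pow_add, Nat.add_comm]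

lemma d1_pow_inv_comm_M1 {x : G} (hx : x ∈ S.M₁) (n : ℕ) :
    (S.δ1 ^ n)⁻¹ * x = x * (S.δ1 ^ n)⁻¹ :=
  (((d1_comm_M1 S hx).pow_left n).inv_left).eq

lemma rep : ∀ g ∈ S.G₁, ∃ P ∈ S.M₁, ∃ n : ℕ, g = P * (S.δ1 ^ n)⁻¹ := by
  intro g hg
  have hg' : g ∈ Subgroup.closure (DivR S.M S.δ1) := hg
  induction hg' using Subgroup.closure_induction with
  | mem d hd => exact ⟨d, Submonoid.subset_closure hd, 0, by simp⟩
  | one => exact ⟨1, one_mem _, 0, by simp⟩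
  | mul x y hx hy ihx ihy =>
    obtain ⟨P, hP, nx, ex⟩ := ihx hx
    obtain ⟨Q, hQ, ny, ey⟩ := ihy hy
    refine ⟨P * Q, mul_mem hP hQ, nx + ny, ?_⟩
    have hcm : (S.δ1 ^ nx)⁻¹ * Q = Q * (S.δ1 ^ nx)⁻¹ := d1_pow_inv_comm_M1 S hQ nx
    calc x * y = P * (S.δ1 ^ nx)⁻¹ * (Q * (S.δ1 ^ ny)⁻¹) := by rw [ex, ey]
      _ = P * ((S.δ1 ^ nx)⁻¹ * Q) * (S.δ1 ^ ny)⁻¹ := by group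
      _ = P * Q * ((S.δ1 ^ nx)⁻¹ * (S.δ1 ^ ny)⁻¹) := by rw [hcm]; group
      _ = P * Q * (S.δ1 ^ (nx + ny))⁻¹ := by
          rw [← mul_inv_rev, ← pow_add, Nat.add_comm ny nx]
  | inv x hx ihx =>
    obtain ⟨P, hP, n, e⟩ := ihx hx
    obtain ⟨Q, hQ, m, eq⟩ := Aprime S P hP
    have hPinv : P⁻¹ = Q * (S.δ1 ^ m)⁻¹ := by
      rw [← eq]; group
    have hcmn : S.δ1 ^ n * Q = Q * S.δ1 ^ n := ((d1_comm_M1 S hQ).pow_left n).eq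
    have hx' : x⁻¹ = Q * (S.δ1 ^ n * (S.δ1 ^ m)⁻¹) := by
      calc x⁻¹ = (P * (S.δ1 ^ n)⁻¹)⁻¹ := by rw [e]
        _ = S.δ1 ^ n * P⁻¹ := by rw [mul_inv_rev, inv_inv]
        _ = S.δ1 ^ n * (Q * (S.δ1 ^ m)⁻¹) := by rw [hPinv]
        _ = (S.δ1 ^ n * Q) * (S.δ1 ^ m)⁻¹ := by rw [mul_assoc]
        _ = (Q * S.δ1 ^ n) * (S.δ1 ^ m)⁻¹ := by rw [hcmn]
        _ = Q * (S.δ1 ^ n * (S.δ1 ^ m)⁻¹) := by rw [mul_assoc]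
    rcases Nat.le_total m n with h | h
    · refine ⟨Q * S.δ1 ^ (n - m), mul_mem hQ (pow_mem (d1_M1 S) _), 0, ?_⟩
      have hnm : S.δ1 ^ n * (S.δ1 ^ m)⁻¹ = S.δ1 ^ (n - m) := by
        have h2 : S.δ1 ^ n = S.δ1 ^ (n - m) * S.δ1 ^ m := by
          rw [← pow_add]; congr 1; omega
        rw [h2, mul_inv_cancel_right]
      rw [hx', hnm]; simp [mul_assoc]
    · refine ⟨Q, hQ, m - n, ?_⟩
      have hnm : S.δ1 ^ n * (S.δ1 ^ m)⁻¹ = (S.δ1 ^ (m - n))⁻¹ := by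
        have h2 : S.δ1 ^ m = S.δ1 ^ (m - n) * S.δ1 ^ n := by
          rw [← pow_add]; congr 1; omega
        rw [h2, mul_inv_rev, mul_inv_cancel_left]
      rw [hx', hnm]

lemma leL_pow_of_mem_M1 {P : G} (hP : P ∈ S.M₁) :
    ∃ m : ℕ, leL S.M P (S.δ1 ^ m) := by
  obtain ⟨Q, hQ, m, eq⟩ := Aprime S P hP
  refine ⟨m, ?_⟩
  show P⁻¹ * S.δ1 ^ m ∈ S.M
  rw [← eq]
  simpa using M1_le_M S hQ

lemma G1M (hc : S.car = ⊤) {g : G} (hg1 : g ∈ S.G₁) (hgM : g ∈ S.M) : g ∈ S.M₁ := by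
  obtain ⟨P, hP, n, e⟩ := rep S g hg1
  obtain ⟨Q, hQ, m, eq⟩ := Aprime S P hP
  have h : leL S.M g (S.δ1 ^ m) := by
    show g⁻¹ * S.δ1 ^ m ∈ S.M
    have : g⁻¹ * S.δ1 ^ m = S.δ1 ^ n * Q := by
      rw [e, ← eq]; group
    rw [this]
    exact mul_mem (pow_mem (d1_M S) n) (M1_le_M S hQ)
  exact mem_M1_of_leL S hc hgM h

lemma ML (hc : S.car = ⊤) : ∀ t : ℕ, ∀ x v w : G, x ∈ S.M → v ∈ S.M₁ → w ∈ S.M₁ →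
    x * v = S.Δ ^ t * w → ∃ r : ℕ, ∃ p ∈ S.M₁, x = S.theta ^ r * p := by
  intro t
  induction t with
  | zero =>
    intro x v w hx hv hw he
    rw [pow_zero, one_mul] at he
    obtain ⟨Q, hQ, m, eq⟩ := Aprime S w hw
    have h : leL S.M x (S.δ1 ^ m) := by
      show x⁻¹ * S.δ1 ^ m ∈ S.M
      have : x⁻¹ * S.δ1 ^ m = v * Q := by rw [← eq, ← he]; group
      rw [this]
      exact mul_mem (M1_le_M S hv) (M1_le_M S hQ)
    exact ⟨0, x, mem_M1_of_leL S hc hx h, by simp⟩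
  | succ t IH =>
    intro x v w hx hv hw he
    have hΔ : leL S.M S.Δ (x * v) := by
      show S.Δ⁻¹ * (x * v) ∈ S.M
      rw [he, pow_succ']
      have : S.Δ⁻¹ * (S.Δ * S.Δ ^ t * w) = S.Δ ^ t * w := by group
      rw [this]
      exact mul_mem (pow_mem S.garside.delta_mem t) (M1_le_M S hw)
    obtain ⟨c, hcM, hcv, hcΔ, hΔxc⟩ := headF S hc x v hx (M1_le_M S hv) hΔ
    have hcM1 : c ∈ S.M₁ := by
      obtain ⟨m, hm⟩ := leL_pow_of_mem_M1 S hv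
      exact mem_M1_of_leL S hc hcM (leL_trans S hcv hm)
    have hcδ : leL S.M c S.δ1 := by
      have hcDR : c ∈ DivR S.M S.δ1 := by
        rw [S.par1.div_eq]
        refine ⟨?_, hcM1⟩
        rw [S.garside.balanced]
        exact ⟨hcM, hcΔ⟩
      have : c ∈ DivL S.M S.δ1 := by rw [← S.par1.balanced]; exact hcDR
      exact this.2
    have hΔxd : leL S.M S.Δ (x * S.δ1) := by
      show S.Δ⁻¹ * (x * S.δ1) ∈ S.M
      have : S.Δ⁻¹ * (x * S.δ1) = (S.Δ⁻¹ * (x * c)) * (c⁻¹ * S.δ1) := by group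
      rw [this]; exact mul_mem hΔxc hcδ
    have hx1M : S.Δ⁻¹ * (x * S.δ1) ∈ S.M := hΔxd
    have he1 : (S.Δ⁻¹ * (x * S.δ1)) * v = S.Δ ^ t * (w * S.δ1) := by
      have hcm : S.δ1 * v = v * S.δ1 := (d1_comm_M1 S hv).eq
      calc (S.Δ⁻¹ * (x * S.δ1)) * v = S.Δ⁻¹ * (x * (S.δ1 * v)) := by group
        _ = S.Δ⁻¹ * (x * (v * S.δ1)) := by rw [hcm]
        _ = S.Δ⁻¹ * ((x * v) * S.δ1) := by group
        _ = S.Δ⁻¹ * ((S.Δ ^ (t + 1) * w) * S.δ1) := by rw [he]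
        _ = S.Δ ^ t * (w * S.δ1) := by rw [pow_succ']; group
    obtain ⟨r, p, hp, hxe⟩ := IH (S.Δ⁻¹ * (x * S.δ1)) v (w * S.δ1) hx1M hv
      (mul_mem hw (d1_M1 S)) he1
    refine ⟨r + 1, p, hp, ?_⟩
    have h1 : x = S.Δ * (S.Δ⁻¹ * (x * S.δ1)) * S.δ1⁻¹ := by group
    rw [h1, hxe]
    have hpd : p * S.δ1⁻¹ = S.δ1⁻¹ * p := ((d1_comm_M1 S hp).inv_left.eq).symm
    have hθd : S.theta ^ r * S.δ1⁻¹ = S.δ1⁻¹ * S.theta ^ r :=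
      (((theta_comm_d1 S hc).symm.pow_left r).inv_right.eq)
    calc S.Δ * (S.theta ^ r * p) * S.δ1⁻¹ = S.Δ * (S.theta ^ r * (p * S.δ1⁻¹)) := by group
      _ = S.Δ * (S.theta ^ r * (S.δ1⁻¹ * p)) := by rw [hpd]
      _ = S.Δ * ((S.theta ^ r * S.δ1⁻¹) * p) := by group
      _ = S.Δ * ((S.δ1⁻¹ * S.theta ^ r) * p) := by rw [hθd]
      _ = (S.Δ * S.δ1⁻¹) * (S.theta ^ r * p) := by group
      _ = S.theta ^ (r + 1) * p := by rw [pow_succ]; show S.theta * _ = _; group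

lemma thetaBar_iff {x : G} :
    x ∈ thetaBar S.M₁ S.theta ↔ ∃ k : ℕ, ∃ h ∈ S.M₁, x = S.theta ^ k * h := by
  constructor
  · rintro (⟨k, _, h, hh, e⟩ | hx)
    · exact ⟨k, h, hh, e⟩
    · exact ⟨0, x, hx, by simp⟩
  · rintro ⟨k, h, hh, e⟩
    cases k with
    | zero => right; rw [e, pow_zero, one_mul]; exact hh
    | succ k => left; exact ⟨k + 1, Nat.succ_le_succ (Nat.zero_le k), h, hh, e⟩

lemma Cmain (hc : S.car = ⊤) {x : G} (hx : x ∈ S.M) (t : ℤ) {g : G} (hg : g ∈ S.G₁)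
    (he : x = S.Δ ^ t * g) : x ∈ thetaBar S.M₁ S.theta := by
  obtain ⟨P, hP, n, eg⟩ := rep S g hg
  rcases le_or_gt 0 t with ht | ht
  · lift t to ℕ using ht with T
    rw [zpow_natCast] at he
    have heq : x * S.δ1 ^ n = S.Δ ^ T * P := by
      rw [he, eg]; group
    obtain ⟨r, p, hp, hxe⟩ := ML S hc T x (S.δ1 ^ n) P hx (pow_mem (d1_M1 S) n) hP heq
    exact (thetaBar_iff S).mpr ⟨r, p, hp, hxe⟩
  · set s : ℕ := (-t).toNat with hs
    have hts : (s : ℤ) = -t := Int.toNat_of_nonneg (by omega)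
    have hΔc : ∀ y : G, S.Δ ^ (s : ℤ) * y = y * S.Δ ^ (s : ℤ) := by
      intro y
      have hcm : Commute S.Δ y := S.delta_central y (mem_car S hc y)
      exact (hcm.zpow_left (s : ℤ)).eq
    have heq : x * (S.δ1 ^ n * S.Δ ^ s) = P := by
      rw [he, eg]
      have h0 : S.Δ ^ t * (P * (S.δ1 ^ n)⁻¹) * (S.δ1 ^ n * S.Δ ^ s)
          = S.Δ ^ t * (P * S.Δ ^ (s : ℤ)) := by
        rw [← zpow_natCast S.Δ s]; group
      rw [h0, ← hΔc P, ← mul_assoc, ← zpow_add, hts]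
      simp
    obtain ⟨Q, hQ, m, eqP⟩ := Aprime S P hP
    have h : leL S.M x (S.δ1 ^ m) := by
      show x⁻¹ * S.δ1 ^ m ∈ S.M
      have : x⁻¹ * S.δ1 ^ m = (S.δ1 ^ n * S.Δ ^ s) * Q := by
        rw [← eqP, ← heq]; group
      rw [this]
      exact mul_mem (mul_mem (pow_mem (d1_M S) n) (pow_mem S.garside.delta_mem s))
        (M1_le_M S hQ)
    exact Or.inr (mem_M1_of_leL S hc hx h)

lemma theta_zpow_eq (hc : S.car = ⊤) (T : ℤ) :
    S.theta ^ T = S.Δ ^ T * S.δ1 ^ (-T) := by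
  have hcm0 : Commute S.Δ S.δ1 := S.delta_central S.δ1 (mem_car S hc _)
  have hcm : Commute S.Δ S.δ1⁻¹ := hcm0.inv_right
  show (S.Δ * S.δ1⁻¹) ^ T = S.Δ ^ T * S.δ1 ^ (-T)
  rw [hcm.mul_zpow, inv_zpow, ← zpow_neg]

lemma mem_thetaBar_of_theta_zpow (hc : S.car = ⊤) {b : G} (hbM : b ∈ S.M) (T : ℤ)
    {y : G} (hy : y ∈ S.G₁) (he : b = S.theta ^ T * y) :
    b ∈ thetaBar S.M₁ S.theta := by
  have he' : b = S.Δ ^ T * (S.δ1 ^ (-T) * y) := by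
    rw [he, theta_zpow_eq S hc, mul_assoc]
  exact Cmain S hc hbM T (mul_mem (zpow_mem (d1_G1 S) _) hy) he'

end Stmt4Aux
end GarsideOrder

open GarsideOrder in
/-- For every `a ∈ Θ̄` and every `b ∈ M \ Θ̄`, both `ab ∈ M \ Θ̄` and `ba ∈ M \ Θ̄`. -/
theorem statement4 {G : Type*} [Group G] (S : Setting G) (hcar : S.car = ⊤) :
    ∀ a ∈ thetaBar S.M₁ S.theta, ∀ b ∈ S.M, b ∉ thetaBar S.M₁ S.theta →
      (a * b ∈ S.M ∧ a * b ∉ thetaBar S.M₁ S.theta) ∧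
      (b * a ∈ S.M ∧ b * a ∉ thetaBar S.M₁ S.theta) := by
  intro a ha b hbM hbn
  obtain ⟨k, g, hg, hae⟩ := (Stmt4Aux.thetaBar_iff S).mp ha
  have hgG1 : g ∈ S.G₁ := Stmt4Aux.M1_le_G1 S g hg
  have haM : a ∈ S.M := by
    rw [hae]
    exact mul_mem (pow_mem (Stmt4Aux.theta_M S) k) (Stmt4Aux.M1_le_M S hg)
  refine ⟨⟨mul_mem haM hbM, ?_⟩, mul_mem hbM haM, ?_⟩
  · intro hab
    obtain ⟨m, h, hh, habe⟩ := (Stmt4Aux.thetaBar_iff S).mp hab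
    apply hbn
    set T : ℤ := (m : ℤ) - (k : ℤ) with hT
    have hcomm : g * S.theta ^ T = S.theta ^ T * g :=
      ((Stmt4Aux.theta_comm_G1 S hcar hgG1).symm.zpow_right T).eq
    have key : a * (S.theta ^ T * (g⁻¹ * h)) = a * b := by
      rw [habe, hae]
      calc S.theta ^ k * g * (S.theta ^ T * (g⁻¹ * h))
          = S.theta ^ k * ((g * S.theta ^ T) * (g⁻¹ * h)) := by group
        _ = S.theta ^ k * ((S.theta ^ T * g) * (g⁻¹ * h)) := by rw [hcomm]
        _ = S.theta ^ k * S.theta ^ T * h := by group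
        _ = S.theta ^ ((k : ℤ) + T) * h := by
            rw [← zpow_natCast S.theta k, ← zpow_add]
        _ = S.theta ^ m * h := by
            rw [show (k : ℤ) + T = (m : ℤ) by rw [hT]; ring, zpow_natCast]
    have hb : b = S.theta ^ T * (g⁻¹ * h) := (mul_left_cancel key).symm
    exact Stmt4Aux.mem_thetaBar_of_theta_zpow S hcar hbM T
      (mul_mem (inv_mem hgG1) (Stmt4Aux.M1_le_G1 S h hh)) hb
  · intro hba
    obtain ⟨m, h, hh, hbae⟩ := (Stmt4Aux.thetaBar_iff S).mp hba
    apply hbn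
    set T : ℤ := (m : ℤ) - (k : ℤ) with hT
    have hhgG1 : h * g⁻¹ ∈ S.G₁ := mul_mem (Stmt4Aux.M1_le_G1 S h hh) (inv_mem hgG1)
    have hcomm : (h * g⁻¹) * S.theta ^ k = S.theta ^ k * (h * g⁻¹) :=
      ((Stmt4Aux.theta_comm_G1 S hcar hhgG1).symm.pow_right k).eq
    have key : (S.theta ^ T * (h * g⁻¹)) * a = b * a := by
      rw [hbae, hae]
      calc S.theta ^ T * (h * g⁻¹) * (S.theta ^ k * g)
          = S.theta ^ T * (((h * g⁻¹) * S.theta ^ k) * g) := by group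
        _ = S.theta ^ T * ((S.theta ^ k * (h * g⁻¹)) * g) := by rw [hcomm]
        _ = S.theta ^ T * S.theta ^ k * h := by group
        _ = S.theta ^ (T + (k : ℤ)) * h := by
            rw [← zpow_natCast S.theta k, ← zpow_add]
        _ = S.theta ^ m * h := by
            rw [show T + (k : ℤ) = (m : ℤ) by rw [hT]; ring, zpow_natCast]
    have hb : b = S.theta ^ T * (h * g⁻¹) := (mul_right_cancel key).symm
    exact Stmt4Aux.mem_thetaBar_of_theta_zpow S hcar hbM T hhgG1 hb
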